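/- Let C be a 2-category with tensors by the arrow category 𝟚, and F : C^op → Cat a normal pseudo-functor preserving powers by 𝟚 (i.e., F(X ⊗ 𝟚) ≅ Cat(𝟚, F(X)) naturally). Then the double category of elements el(F) has tabulators: the tabulator of a vertical morphism α : (X, x) ↛ (X, y) is given by (X ⊗ 𝟚, ᾱ), where ᾱ ∈ F(X ⊗ 𝟚) corresponds to the functor α : 𝟚 → F(X) under the preservation isomorphism, equipped with the square induced by the universal 2-morphism ζ : ζ₀ ⟹ ζ₁ : X → X ⊗ 𝟚. -/

import Mathlib

open CategoryTheory
open scoped CategoryTheory.Bicategory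

universe u

variable {C : Type u} [Bicategory.{u, u} C] [Bicategory.Strict C]

/-- A normal pseudofunctor `C^op ⟶ Cat` on a 2-category `C` (contravariant on 1-morphisms,
covariant on 2-morphisms): it preserves identities strictly and composition up to
coherent compositor isomorphisms. -/
structure NPCat (C : Type u) [Bicategory.{u, u} C] [Bicategory.Strict C] where
  obj : C → Cat.{u, u}
  map : ∀ {X Y : C}, (X ⟶ Y) → (obj Y ⥤ obj X)
  map₂ : ∀ {X Y : C} {f g : X ⟶ Y}, (f ⟶ g) → (map f ⟶ map g)
  map₂_id : ∀ {X Y : C} (f : X ⟶ Y), map₂ (𝟙 f) = 𝟙 (map f)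
  map₂_comp : ∀ {X Y : C} {f g h : X ⟶ Y} (γ : f ⟶ g) (δ : g ⟶ h),
      map₂ (γ ≫ δ) = map₂ γ ≫ map₂ δ
  map_id : ∀ X : C, map (𝟙 X) = 𝟭 (obj X)
  mapComp : ∀ {X Y Z : C} (f : X ⟶ Y) (g : Y ⟶ Z), map g ⋙ map f ≅ map (f ≫ g)
  mapComp_natural : ∀ {X Y Z : C} {f f' : X ⟶ Y} {g g' : Y ⟶ Z} (γ : f ⟶ f') (δ : g ⟶ g'),
      (CategoryTheory.Functor.whiskerRight (map₂ δ) (map f) ≫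
        CategoryTheory.Functor.whiskerLeft (map g') (map₂ γ)) ≫ (mapComp f' g').hom =
      (mapComp f g).hom ≫ map₂ (γ ▷ g ≫ f' ◁ δ)
  mapComp_assoc : ∀ {X Y Z W : C} (f : X ⟶ Y) (g : Y ⟶ Z) (h : Z ⟶ W),
      CategoryTheory.Functor.whiskerLeft (map h) (mapComp f g).hom ≫ (mapComp (f ≫ g) h).hom =
      CategoryTheory.Functor.whiskerRight (mapComp g h).hom (map f) ≫ (mapComp f (g ≫ h)).hom ≫
        eqToHom (by rw [Category.assoc])
  mapComp_id_left : ∀ {X Y : C} (f : X ⟶ Y),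
      (mapComp (𝟙 X) f).hom = eqToHom (by rw [map_id, Functor.comp_id, Category.id_comp])
  mapComp_id_right : ∀ {X Y : C} (f : X ⟶ Y),
      (mapComp f (𝟙 Y)).hom = eqToHom (by rw [map_id, Functor.id_comp, Category.comp_id])

/-- Precomposition with `c` as a functor between hom-categories of a 2-category. -/
def precompF (I : C) {X Y : C} (c : X ⟶ Y) : (Y ⟶ I) ⥤ (X ⟶ I) where
  obj h := c ≫ h
  map η := c ◁ η
  map_id h := Bicategory.whiskerLeft_id c h
  map_comp η θ := Bicategory.whiskerLeft_comp c η θ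

/-- Whiskering of `precompF` in the first variable. -/
def precompNat (I : C) {X Y : C} {c d : X ⟶ Y} (γ : c ⟶ d) :
    precompF I c ⟶ precompF I d where
  app h := γ ▷ h
  naturality _ _ η := Bicategory.whisker_exchange γ η

lemma precompF_comp (I : C) {X Y Z : C} (c : X ⟶ Y) (d : Y ⟶ Z) :
    precompF I d ⋙ precompF I c = precompF I (c ≫ d) := by
  refine CategoryTheory.Functor.ext (fun h => (Category.assoc c d h).symm) ?_
  intro h h' η
  simp only [precompF, Functor.comp_map]
  rw [Bicategory.comp_whiskerLeft]
  simp only [Bicategory.Strict.associator_eqToIso, eqToIso.hom, eqToIso.inv, Category.assoc,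
    eqToHom_trans, eqToHom_trans_assoc, eqToHom_refl, Category.comp_id, Category.id_comp]
  have key : ∀ {A : Type u} [Category.{u} A] {a b c : A} (f : a ⟶ b) (p : b = c) (q : c = b),
      f = f ≫ eqToHom p ≫ eqToHom q := by
    intros; subst_vars; simp
  exact key _ _ _

/-- A bi-representation of a normal pseudofunctor `F : C^op ⟶ Cat`: an object `I`
together with a pseudo-natural (adjoint) equivalence `C(−, I) ≃ F`. -/
structure BiRep (F : NPCat C) (I : C) where
  app : ∀ X : C, (X ⟶ I) ⥤ F.obj X
  app_equiv : ∀ X : C, (app X).IsEquivalence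
  nat : ∀ {X Y : C} (c : X ⟶ Y), app Y ⋙ F.map c ≅ precompF I c ⋙ app X
  nat_natural : ∀ {X Y : C} {c d : X ⟶ Y} (γ : c ⟶ d),
      CategoryTheory.Functor.whiskerLeft (app Y) (F.map₂ γ) ≫ (nat d).hom =
      (nat c).hom ≫ CategoryTheory.Functor.whiskerRight (precompNat I γ) (app X)
  nat_comp : ∀ {X Y Z : C} (c : X ⟶ Y) (d : Y ⟶ Z),
      (nat (c ≫ d)).hom =
      CategoryTheory.Functor.whiskerLeft (app Z) (F.mapComp c d).inv ≫
        CategoryTheory.Functor.whiskerRight (nat d).hom (F.map c) ≫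
        CategoryTheory.Functor.whiskerLeft (precompF I d) (nat c).hom ≫
        eqToHom (congrArg (fun K => K ⋙ app X) (precompF_comp I c d))

/-- `(T, z₀, z₁, z)` exhibits `T` as a tensor of `X` by the walking arrow `𝟚` in a
2-category: for every object `Z`, precomposition with the universal 2-morphism
`z : z₀ ⟶ z₁` induces an isomorphism between the category of morphisms `T ⟶ Z` and the
arrow category of `X ⟶ Z` (expressed elementwise on objects and morphisms). -/
def IsTensorBy2 (C : Type u) [Bicategory.{u, u} C] [Bicategory.Strict C]
    {X T : C} (z₀ z₁ : X ⟶ T) (z : z₀ ⟶ z₁) : Prop :=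
  (∀ (Z : C) (k₀ k₁ : X ⟶ Z) (κ : k₀ ⟶ k₁),
    ∃! s : T ⟶ Z, ∃ (e₀ : z₀ ≫ s = k₀) (e₁ : z₁ ≫ s = k₁),
      κ = eqToHom e₀.symm ≫ z ▷ s ≫ eqToHom e₁) ∧
  (∀ (Z : C) (s s' : T ⟶ Z) (θ₀ : z₀ ≫ s ⟶ z₀ ≫ s') (θ₁ : z₁ ≫ s ⟶ z₁ ≫ s'),
    z ▷ s ≫ θ₁ = θ₀ ≫ z ▷ s' →
    ∃! θ : s ⟶ s', z₀ ◁ θ = θ₀ ∧ z₁ ◁ θ = θ₁)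

/-- The canonical comparison functor `F(T) ⥤ Cat(𝟚, F(X))` (the codomain realised as the
arrow category of `F(X)`) induced by the universal 2-morphism `z : z₀ ⟶ z₁` of a tensor
by `𝟚`. -/
def cmpFun (F : NPCat C) {X T : C} (z₀ z₁ : X ⟶ T) (z : z₀ ⟶ z₁) :
    F.obj T ⥤ Arrow (F.obj X) where
  obj a := Arrow.mk ((F.map₂ z).app a)
  map {a b} m := Arrow.homMk (u := (F.map z₀).map m) (v := (F.map z₁).map m) ((F.map₂ z).naturality m)
  map_id a := by ext <;> simp
  map_comp m m' := by ext <;> simp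

/-- `F` preserves powers by `𝟚` at a tensor `(T, z₀, z₁, z)`: the canonical comparison
functor is an isomorphism of categories. -/
def PreservesPowerBy2 (F : NPCat C) {X T : C} (z₀ z₁ : X ⟶ T) (z : z₀ ⟶ z₁) : Prop :=
  ∃ E : Arrow (F.obj X) ⥤ F.obj T,
    cmpFun F z₀ z₁ z ⋙ E = 𝟭 (F.obj T) ∧ E ⋙ cmpFun F z₀ z₁ z = 𝟭 (Arrow (F.obj X))

/-!
STATEMENT 17: Let `C` be a 2-category with tensors by `𝟚` and `F : C^op ⟶ Cat` a normal
pseudofunctor preserving powers by `𝟚`.  Then the double category of elements `el(F)` has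
tabulators: the tabulator of a vertical morphism `α : (X, x) ↛ (X, y)` is
`(X ⊗ 𝟚, ᾱ)` — where `ᾱ ∈ F(X ⊗ 𝟚)` corresponds to `α : 𝟚 → F(X)` under the
preservation isomorphism — equipped with the square induced by the universal 2-morphism
`ζ : ζ₀ ⟶ ζ₁ : X → X ⊗ 𝟚`.  Both the one- and the two-dimensional universal properties
of tabulators in `el(F)` are spelled out explicitly in terms of the data of `el(F)`.
-/
section Aux

lemma NPCat.map₂_eqToHom (F : NPCat C) {X Y : C} {f g : X ⟶ Y} (h : f = g) :
    F.map₂ (eqToHom h) = eqToHom (congrArg F.map h) := by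
  subst h; simp [F.map₂_id]

/-- Component form of `mapComp_natural` with `γ = 𝟙`. -/
lemma NPCat.mapComp_nat_right (F : NPCat C) {X Y Z : C} (f : X ⟶ Y) {g g' : Y ⟶ Z}
    (δ : g ⟶ g') (w : F.obj Z) :
    (F.map f).map ((F.map₂ δ).app w) ≫ (F.mapComp f g').hom.app w
      = (F.mapComp f g).hom.app w ≫ (F.map₂ (f ◁ δ)).app w := by
  have h := congrArg (fun t => NatTrans.app t w) (F.mapComp_natural (𝟙 f) δ)
  simpa [F.map₂_id] using h

/-- Component form of `mapComp_natural` with `δ = 𝟙`. -/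
lemma NPCat.mapComp_nat_left (F : NPCat C) {X Y Z : C} {f f' : X ⟶ Y} (γ : f ⟶ f')
    (g : Y ⟶ Z) (w : F.obj Z) :
    (F.map₂ γ).app ((F.map g).obj w) ≫ (F.mapComp f' g).hom.app w
      = (F.mapComp f g).hom.app w ≫ (F.map₂ (γ ▷ g)).app w := by
  have h := congrArg (fun t => NatTrans.app t w) (F.mapComp_natural γ (𝟙 g))
  simpa [F.map₂_id] using h

variable (F : NPCat C) {X T : C} {z₀ z₁ : X ⟶ T} {z : z₀ ⟶ z₁}
variable {E : Arrow (F.obj X) ⥤ F.obj T}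

lemma faithful_aux (hE1 : cmpFun F z₀ z₁ z ⋙ E = 𝟭 (F.obj T))
    {a b : F.obj T} (m m' : a ⟶ b)
    (h0 : (F.map z₀).map m = (F.map z₀).map m')
    (h1 : (F.map z₁).map m = (F.map z₁).map m') : m = m' := by
  have hc : (cmpFun F z₀ z₁ z).map m = (cmpFun F z₀ z₁ z).map m' := by
    apply CommaMorphism.ext <;> assumption
  have h := Functor.congr_hom hE1.symm m
  have h' := Functor.congr_hom hE1.symm m'
  simp only [Functor.id_map, Functor.comp_map] at h h'
  rw [h, h', hc]

lemma full_aux (hE1 : cmpFun F z₀ z₁ z ⋙ E = 𝟭 (F.obj T))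
    (hE2 : E ⋙ cmpFun F z₀ z₁ z = 𝟭 (Arrow (F.obj X)))
    {a b : F.obj T} (k : (cmpFun F z₀ z₁ z).obj a ⟶ (cmpFun F z₀ z₁ z).obj b) :
    (cmpFun F z₀ z₁ z).map
      (eqToHom (Functor.congr_obj hE1 a).symm ≫ E.map k ≫
        eqToHom (Functor.congr_obj hE1 b)) = k := by
  rw [Functor.map_comp, Functor.map_comp, eqToHom_map, eqToHom_map]
  have := Functor.congr_hom hE2 k
  simp only [Functor.comp_map] at this
  rw [this]
  simp

end Aux

lemma Arrow.hom_congr' {D : Type*} [Category D] {a b : Arrow D} (h : a = b) :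
    a.hom = eqToHom (congrArg Comma.left h) ≫ b.hom ≫ eqToHom (congrArg Comma.right h).symm := by
  subst h; simp

lemma cancel_aux {D : Type u} [Category.{u} D] {a b c d e : D} (i : a ⟶ b) [IsIso i]
    (j : c ⟶ d) [IsIso j] (k : d = e) {v v' : b ⟶ c}
    (h : i ≫ v ≫ j ≫ eqToHom k = i ≫ v' ≫ j ≫ eqToHom k) : v = v' := by
  have h2 := congrArg (fun t => inv i ≫ t ≫ eqToHom k.symm ≫ inv j) h
  simpa using h2

section Aux2
variable (F : NPCat C) {X T : C} {z₀ z₁ : X ⟶ T} {z : z₀ ⟶ z₁}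
variable {E : Arrow (F.obj X) ⥤ F.obj T}

lemma exists_chi (hE1 : cmpFun F z₀ z₁ z ⋙ E = 𝟭 (F.obj T))
    (hE2 : E ⋙ cmpFun F z₀ z₁ z = 𝟭 (Arrow (F.obj X)))
    {a b : F.obj T} (u₀ : (F.map z₀).obj a ≅ (F.map z₀).obj b)
    (u₁ : (F.map z₁).obj a ≅ (F.map z₁).obj b)
    (comm : u₀.hom ≫ (F.map₂ z).app b = (F.map₂ z).app a ≫ u₁.hom) :
    ∃ χ : a ≅ b, (F.map z₀).map χ.hom = u₀.hom ∧ (F.map z₁).map χ.hom = u₁.hom := by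
  let k : (cmpFun F z₀ z₁ z).obj a ≅ (cmpFun F z₀ z₁ z).obj b := Arrow.isoMk u₀ u₁ comm
  refine ⟨eqToIso (Functor.congr_obj hE1 a).symm ≪≫ E.mapIso k ≪≫
      eqToIso (Functor.congr_obj hE1 b), ?_, ?_⟩
  · have h := full_aux F hE1 hE2 (a := a) (b := b) k.hom
    have h' : (cmpFun F z₀ z₁ z).map
        ((eqToIso (Functor.congr_obj hE1 a).symm ≪≫ E.mapIso k ≪≫
          eqToIso (Functor.congr_obj hE1 b)).hom) = k.hom := by
      simpa [Category.assoc] using h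
    exact congrArg CommaMorphism.left h'
  · have h := full_aux F hE1 hE2 (a := a) (b := b) k.hom
    have h' : (cmpFun F z₀ z₁ z).map
        ((eqToIso (Functor.congr_obj hE1 a).symm ≪≫ E.mapIso k ≪≫
          eqToIso (Functor.congr_obj hE1 b)).hom) = k.hom := by
      simpa [Category.assoc] using h
    exact congrArg CommaMorphism.right h'

end Aux2

lemma whisker_step (F : NPCat C) {X T W : C} (z₀' : X ⟶ T)
    {s s' : T ⟶ W} (th : s' ⟶ s) {c c' : X ⟶ W}
    (e₀ : z₀' ≫ s = c) (e₀' : z₀' ≫ s' = c') (t₀ : c' ⟶ c)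
    (hth : z₀' ◁ th = eqToHom e₀' ≫ t₀ ≫ eqToHom e₀.symm)
    {w w' : F.obj W} (m : w' ⟶ w) :
    (F.map z₀').map ((F.map s').map m) ≫ (F.map z₀').map ((F.map₂ th).app w)
      = (F.mapComp z₀' s').hom.app w' ≫ eqToHom (by rw [e₀']) ≫ (F.map c').map m
          ≫ (F.map₂ t₀).app w ≫ eqToHom (by rw [e₀]) ≫ (F.mapComp z₀' s).inv.app w := by
  have n1 := (F.mapComp z₀' s').hom.naturality m
  have n2 := F.mapComp_nat_right z₀' th w
  have n1' : (F.map z₀').map ((F.map s').map m)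
      = (F.mapComp z₀' s').hom.app w' ≫ (F.map (z₀' ≫ s')).map m
          ≫ (F.mapComp z₀' s').inv.app w := by
    have := congrArg (fun t => t ≫ (F.mapComp z₀' s').inv.app w) n1
    simpa using this
  have n2' : (F.map z₀').map ((F.map₂ th).app w)
      = (F.mapComp z₀' s').hom.app w ≫ (F.map₂ (z₀' ◁ th)).app w
          ≫ (F.mapComp z₀' s).inv.app w := by
    have := congrArg (fun t => t ≫ (F.mapComp z₀' s).inv.app w) n2
    simpa using this
  rw [n1', n2', hth, F.map₂_comp, F.map₂_comp, NPCat.map₂_eqToHom, NPCat.map₂_eqToHom,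
    Functor.congr_hom (congrArg F.map e₀') m]
  simp [eqToHom_app]
theorem stmt17 (F : NPCat C)
    -- tensors by `𝟚` in `C`:
    (T : C → C) (z₀ z₁ : ∀ X : C, X ⟶ T X) (z : ∀ X : C, z₀ X ⟶ z₁ X)
    (htens : ∀ X : C, IsTensorBy2 C (z₀ X) (z₁ X) (z X))
    -- `F` preserves the corresponding powers by `𝟚`, via a strict inverse `E X` of the
    -- canonical comparison functor:
    (E : ∀ X : C, Arrow (F.obj X) ⥤ F.obj (T X))
    (hE : ∀ X : C, cmpFun F (z₀ X) (z₁ X) (z X) ⋙ E X = 𝟭 (F.obj (T X)) ∧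
      E X ⋙ cmpFun F (z₀ X) (z₁ X) (z X) = 𝟭 (Arrow (F.obj X)))
    -- a vertical morphism `α : (X, x) ↛ (X, y)` of `el(F)`:
    (X : C) (x y : F.obj X) (α : x ⟶ y) :
    -- the tabulator object `(T X, ᾱ)` with `ᾱ = E X (Arrow.mk α)` carries a universal
    -- square: a horizontal top `(z₀ X, ψ₀)`, a horizontal bottom `(z₁ X, ψ₁)` and the
    -- filler `z X`, satisfying the square condition of `el(F)` and the one- and
    -- two-dimensional universal properties of a tabulator:
    ∃ (ψ₀ : x ≅ (F.map (z₀ X)).obj ((E X).obj (Arrow.mk α)))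
      (ψ₁ : y ≅ (F.map (z₁ X)).obj ((E X).obj (Arrow.mk α))),
      -- `(z X, ψ₀, ψ₁)` is a square of `el(F)` from the vertical identity of
      -- `(T X, ᾱ)` to `α`:
      (ψ₀.hom ≫ (F.map₂ (z X)).app ((E X).obj (Arrow.mk α)) = α ≫ ψ₁.hom) ∧
      -- 1-dimensional universal property: every square of `el(F)` from a vertical
      -- identity to `α` factors uniquely through it via a horizontal morphism of
      -- `el(F)` into `(T X, ᾱ)`:
      (∀ (W : C) (w : F.obj W) (c d : X ⟶ W)
        (ψ : x ≅ (F.map c).obj w) (φ : y ≅ (F.map d).obj w) (γ : c ⟶ d),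
        ψ.hom ≫ (F.map₂ γ).app w = α ≫ φ.hom →
        ∃! t : Σ' s : T X ⟶ W, (E X).obj (Arrow.mk α) ≅ (F.map s).obj w,
          ∃ (e₀ : z₀ X ≫ t.1 = c) (e₁ : z₁ X ≫ t.1 = d),
            γ = eqToHom e₀.symm ≫ z X ▷ t.1 ≫ eqToHom e₁ ∧
            ψ.hom = ψ₀.hom ≫ (F.map (z₀ X)).map t.2.hom ≫
              (F.mapComp (z₀ X) t.1).hom.app w ≫ eqToHom (by rw [e₀]) ∧
            φ.hom = ψ₁.hom ≫ (F.map (z₁ X)).map t.2.hom ≫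
              (F.mapComp (z₁ X) t.1).hom.app w ≫ eqToHom (by rw [e₁])) ∧
      -- 2-dimensional universal property: compatible pairs of squares into the top and
      -- bottom of `α` correspond uniquely to squares into the factorizing morphisms:
      (∀ (W : C) (w w' : F.obj W) (m : w' ⟶ w)
        (c d : X ⟶ W) (ψ : x ≅ (F.map c).obj w) (φ : y ≅ (F.map d).obj w) (γ : c ⟶ d)
        (c' d' : X ⟶ W) (ψ' : x ≅ (F.map c').obj w') (φ' : y ≅ (F.map d').obj w')
        (γ' : c' ⟶ d')
        (t₀ : c' ⟶ c) (t₁ : d' ⟶ d),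
        ψ.hom ≫ (F.map₂ γ).app w = α ≫ φ.hom →
        ψ'.hom ≫ (F.map₂ γ').app w' = α ≫ φ'.hom →
        -- `t₀` and `t₁` are squares `θ₀`, `θ₁` of `el(F)`:
        ψ'.hom ≫ (F.map c').map m ≫ (F.map₂ t₀).app w = ψ.hom →
        φ'.hom ≫ (F.map d').map m ≫ (F.map₂ t₁).app w = φ.hom →
        -- pasting compatibility:
        t₀ ≫ γ = γ' ≫ t₁ →
        -- given the factorizations `t`, `t'` of the two squares through the tabulator:
        ∀ (s : T X ⟶ W) (χ : (E X).obj (Arrow.mk α) ≅ (F.map s).obj w)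
          (s' : T X ⟶ W) (χ' : (E X).obj (Arrow.mk α) ≅ (F.map s').obj w')
          (e₀ : z₀ X ≫ s = c) (e₁ : z₁ X ≫ s = d)
          (e₀' : z₀ X ≫ s' = c') (e₁' : z₁ X ≫ s' = d'),
          γ = eqToHom e₀.symm ≫ z X ▷ s ≫ eqToHom e₁ →
          ψ.hom = ψ₀.hom ≫ (F.map (z₀ X)).map χ.hom ≫
            (F.mapComp (z₀ X) s).hom.app w ≫ eqToHom (by rw [e₀]) →
          φ.hom = ψ₁.hom ≫ (F.map (z₁ X)).map χ.hom ≫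
            (F.mapComp (z₁ X) s).hom.app w ≫ eqToHom (by rw [e₁]) →
          γ' = eqToHom e₀'.symm ≫ z X ▷ s' ≫ eqToHom e₁' →
          ψ'.hom = ψ₀.hom ≫ (F.map (z₀ X)).map χ'.hom ≫
            (F.mapComp (z₀ X) s').hom.app w' ≫ eqToHom (by rw [e₀']) →
          φ'.hom = ψ₁.hom ≫ (F.map (z₁ X)).map χ'.hom ≫
            (F.mapComp (z₁ X) s').hom.app w' ≫ eqToHom (by rw [e₁']) →
          -- there is a unique square of `el(F)` from `(s', χ')` to `(s, χ)` over `m`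
          -- whiskering to `θ₀` and `θ₁`:
          ∃! th : s' ⟶ s,
            (χ'.hom ≫ (F.map s').map m ≫ (F.map₂ th).app w = χ.hom) ∧
            t₀ = eqToHom e₀'.symm ≫ z₀ X ◁ th ≫ eqToHom e₀ ∧
            t₁ = eqToHom e₁'.symm ≫ z₁ X ◁ th ≫ eqToHom e₁) := by
  obtain ⟨hE1, hE2⟩ := hE X
  have hA : (cmpFun F (z₀ X) (z₁ X) (z X)).obj ((E X).obj (Arrow.mk α)) = Arrow.mk α :=
    Functor.congr_obj hE2 (Arrow.mk α)
  have h₀ : (F.map (z₀ X)).obj ((E X).obj (Arrow.mk α)) = x := congrArg Comma.left hA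
  have h₁ : (F.map (z₁ X)).obj ((E X).obj (Arrow.mk α)) = y := congrArg Comma.right hA
  have hz : (F.map₂ (z X)).app ((E X).obj (Arrow.mk α)) = eqToHom h₀ ≫ α ≫ eqToHom h₁.symm :=
    Arrow.hom_congr' hA
  refine ⟨eqToIso h₀.symm, eqToIso h₁.symm, ?_, ?_, ?_⟩
  · rw [hz]; simp
  · intro W w c d ψ φ γ hsq
    obtain ⟨s, ⟨e₀, e₁, hγ⟩, suniq⟩ := (htens X).1 W c d γ
    have k₀ : (F.map c).obj w = (F.map (z₀ X ≫ s)).obj w := by rw [e₀]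
    have k₁ : (F.map d).obj w = (F.map (z₁ X ≫ s)).obj w := by rw [e₁]
    have comm : (eqToIso h₀ ≪≫ ψ ≪≫ eqToIso k₀ ≪≫ ((F.mapComp (z₀ X) s).app w).symm).hom ≫
          (F.map₂ (z X)).app ((F.map s).obj w)
        = (F.map₂ (z X)).app ((E X).obj (Arrow.mk α)) ≫
          (eqToIso h₁ ≪≫ φ ≪≫ eqToIso k₁ ≪≫ ((F.mapComp (z₁ X) s).app w).symm).hom := by
      have nl := F.mapComp_nat_left (z X) s w
      rw [← cancel_mono ((F.mapComp (z₁ X) s).hom.app w)]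
      simp only [Iso.trans_hom, eqToIso.hom, Iso.symm_hom, Iso.app_inv, Category.assoc]
      rw [nl, hz]
      simp only [Iso.inv_hom_id_app, Category.comp_id, eqToHom_trans_assoc, eqToHom_refl,
        Category.id_comp, Category.assoc, Iso.inv_hom_id_app_assoc]
      rw [reassoc_of% hsq.symm, hγ]
      rw [F.map₂_comp, F.map₂_comp, NPCat.map₂_eqToHom, NPCat.map₂_eqToHom]
      simp [eqToHom_app]
    obtain ⟨χ, hχ₀, hχ₁⟩ := exists_chi F hE1 hE2 _ _ comm
    refine ⟨⟨s, χ⟩, ⟨e₀, e₁, hγ, ?_, ?_⟩, ?_⟩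
    · rw [hχ₀]; simp
    · rw [hχ₁]; simp
    · rintro ⟨s', χ'⟩ ⟨e₀', e₁', hγ', hψ', hφ'⟩
      have hs : s' = s := suniq s' ⟨e₀', e₁', hγ'⟩
      subst hs
      suffices hc : χ' = χ by rw [hc]
      apply Iso.ext
      apply faithful_aux F hE1
      · have hq : ψ.hom = (eqToIso h₀.symm).hom ≫ (F.map (z₀ X)).map χ.hom ≫
            (F.mapComp (z₀ X) s').hom.app w ≫ eqToHom k₀.symm := by rw [hχ₀]; simp
        exact cancel_aux _ _ k₀.symm (hψ'.symm.trans hq)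
      · have hq : φ.hom = (eqToIso h₁.symm).hom ≫ (F.map (z₁ X)).map χ.hom ≫
            (F.mapComp (z₁ X) s').hom.app w ≫ eqToHom k₁.symm := by rw [hχ₁]; simp
        exact cancel_aux _ _ k₁.symm (hφ'.symm.trans hq)
  · intro W w w' m c d ψ φ γ c' d' ψ' φ' γ' t₀ t₁ hsq hsq' hθ₀ hθ₁ hpaste
    intro s χ s' χ' e₀ e₁ e₀' e₁' hγ hψeq hφeq hγ' hψ'eq hφ'eq
    have hcompat : z X ▷ s' ≫ (eqToHom e₁' ≫ t₁ ≫ eqToHom e₁.symm)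
        = (eqToHom e₀' ≫ t₀ ≫ eqToHom e₀.symm) ≫ z X ▷ s := by
      have hp := hpaste
      rw [hγ, hγ'] at hp
      have h2 := congrArg (fun u => eqToHom e₀' ≫ u ≫ eqToHom e₁.symm) hp
      simpa using h2.symm
    obtain ⟨th, ⟨hth₀, hth₁⟩, thuniq⟩ := (htens X).2 W s' s
      (eqToHom e₀' ≫ t₀ ≫ eqToHom e₀.symm) (eqToHom e₁' ≫ t₁ ≫ eqToHom e₁.symm) hcompat
    refine ⟨th, ⟨?_, ?_, ?_⟩, ?_⟩
    · apply faithful_aux F hE1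
      · have w0 := whisker_step F (z₀ X) th e₀ e₀' t₀ hth₀ m
        have hx : (F.map (z₀ X)).map χ.hom = (eqToIso h₀.symm).inv ≫ ψ.hom ≫
            eqToHom (show (F.map c).obj w = (F.map (z₀ X ≫ s)).obj w by rw [e₀]) ≫
            (F.mapComp (z₀ X) s).inv.app w := by
          rw [hψeq]; simp
        have hx' : (F.map (z₀ X)).map χ'.hom = (eqToIso h₀.symm).inv ≫ ψ'.hom ≫
            eqToHom (show (F.map c').obj w' = (F.map (z₀ X ≫ s')).obj w' by rw [e₀']) ≫
            (F.mapComp (z₀ X) s').inv.app w' := by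
          rw [hψ'eq]; simp
        rw [Functor.map_comp, Functor.map_comp, w0, hx, hx']
        simp only [Category.assoc, Iso.inv_hom_id_app_assoc, eqToHom_trans_assoc, eqToHom_refl,
          Category.id_comp]
        rw [reassoc_of% hθ₀]
      · have w1 := whisker_step F (z₁ X) th e₁ e₁' t₁ hth₁ m
        have hx : (F.map (z₁ X)).map χ.hom = (eqToIso h₁.symm).inv ≫ φ.hom ≫
            eqToHom (show (F.map d).obj w = (F.map (z₁ X ≫ s)).obj w by rw [e₁]) ≫
            (F.mapComp (z₁ X) s).inv.app w := by
          rw [hφeq]; simp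
        have hx' : (F.map (z₁ X)).map χ'.hom = (eqToIso h₁.symm).inv ≫ φ'.hom ≫
            eqToHom (show (F.map d').obj w' = (F.map (z₁ X ≫ s')).obj w' by rw [e₁']) ≫
            (F.mapComp (z₁ X) s').inv.app w' := by
          rw [hφ'eq]; simp
        rw [Functor.map_comp, Functor.map_comp, w1, hx, hx']
        simp only [Category.assoc, Iso.inv_hom_id_app_assoc, eqToHom_trans_assoc, eqToHom_refl,
          Category.id_comp]
        rw [reassoc_of% hθ₁]
    · rw [hth₀]; simp
    · rw [hth₁]; simp
    · rintro th' ⟨-, h2, h3⟩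
      refine thuniq th' ⟨?_, ?_⟩
      · rw [h2]; simp
      · rw [h3]; simp
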